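/- Let A be an integral domain which is an ℝ-algebra. Let I₀, J₀ be ℝ-linearly independent imaginary units, let f = f₀ + f₁·ι(I₀) and h = h₀ + h₁·ι(J₀) with f₀, f₁, h₀, h₁ ∈ A and f₁ ≠ 0, h₁ ≠ 0, and let K₀ be an imaginary unit. Then f + h is K₀-sliced if and only if there exist a, b ∈ ℝ \ {0} such that K₀ = aI₀ + bJ₀ and b·f₁ = a·h₁ in A (real scalars acting via algebraMap ℝ A). (Proposition 4.1.) -/

import Mathlib

open Quaternion

/-- The componentwise extension `ι : ℍ[ℝ] → ℍ[A]` of `algebraMap ℝ A`. -/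
noncomputable def qmap {A : Type*} [CommRing A] [Algebra ℝ A] (q : Quaternion ℝ) :
    Quaternion A :=
  ⟨algebraMap ℝ A q.re, algebraMap ℝ A q.imI, algebraMap ℝ A q.imJ, algebraMap ℝ A q.imK⟩

/-- An imaginary unit: a real quaternion with zero real part squaring to `-1`. -/
def IsImaginaryUnit (I : Quaternion ℝ) : Prop := I.re = 0 ∧ I ^ 2 = -1

/-- `q` is `I`-sliced if `q = a + b·ι(I)` for some `a, b ∈ A`. -/
noncomputable def IsSliced {A : Type*} [CommRing A] [Algebra ℝ A]
    (I : Quaternion ℝ) (q : Quaternion A) : Prop :=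
  ∃ a b : A, q = (a : Quaternion A) + (b : Quaternion A) * qmap I

lemma exists_dual {K V : Type*} [Field K] [AddCommGroup V] [Module K V]
    {n : ℕ} (v : Fin n → V) (hv : LinearIndependent K v) (i : Fin n) :
    ∃ φ : V →ₗ[K] K, ∀ j, φ (v j) = if j = i then 1 else 0 := by
  classical
  have hs : LinearIndepOn K id (Set.range v) := (linearIndepOn_id_range_iff hv.injective).mpr hv
  let B := Module.Basis.extend hs
  have hmem : ∀ j, v j ∈ hs.extend (Set.subset_univ _) :=
    fun j => hs.subset_extend _ ⟨j, rfl⟩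
  refine ⟨B.coord ⟨v i, hmem i⟩, fun j => ?_⟩
  have hB : ∀ j, B ⟨v j, hmem j⟩ = v j := fun j => Module.Basis.extend_apply_self hs _
  rw [Module.Basis.coord_apply, ← hB j, Module.Basis.repr_self, Finsupp.single_apply]
  simp [Subtype.ext_iff, hv.injective.eq_iff]

lemma phi_decomp {φ : Quaternion ℝ →ₗ[ℝ] ℝ} (q : Quaternion ℝ) (hq : q.re = 0) :
    φ q = q.imI * φ ⟨0,1,0,0⟩ + q.imJ * φ ⟨0,0,1,0⟩ + q.imK * φ ⟨0,0,0,1⟩ := by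
  have hdecomp : q = q.imI • (⟨0,1,0,0⟩ : Quaternion ℝ) + q.imJ • (⟨0,0,1,0⟩ : Quaternion ℝ)
      + q.imK • (⟨0,0,0,1⟩ : Quaternion ℝ) := by
    ext <;> simp [hq]
  conv_lhs => rw [hdecomp]
  erw [map_add, map_add, map_smul, map_smul, map_smul, smul_eq_mul, smul_eq_mul, smul_eq_mul]

lemma qmap_re {A : Type*} [CommRing A] [Algebra ℝ A] (q : Quaternion ℝ) :
    (qmap q : Quaternion A).re = algebraMap ℝ A q.re := rfl

lemma qmap_imI {A : Type*} [CommRing A] [Algebra ℝ A] (q : Quaternion ℝ) :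
    (qmap q : Quaternion A).imI = algebraMap ℝ A q.imI := rfl

lemma qmap_imJ {A : Type*} [CommRing A] [Algebra ℝ A] (q : Quaternion ℝ) :
    (qmap q : Quaternion A).imJ = algebraMap ℝ A q.imJ := rfl

lemma qmap_imK {A : Type*} [CommRing A] [Algebra ℝ A] (q : Quaternion ℝ) :
    (qmap q : Quaternion A).imK = algebraMap ℝ A q.imK := rfl

theorem sum_one_slice_preserving {A : Type*} [CommRing A] [IsDomain A] [Algebra ℝ A]
    (I₀ J₀ K₀ : Quaternion ℝ)
    (hI₀ : IsImaginaryUnit I₀) (hJ₀ : IsImaginaryUnit J₀) (hK₀ : IsImaginaryUnit K₀)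
    (hind : LinearIndependent ℝ ![I₀, J₀])
    (f₀ f₁ h₀ h₁ : A) (hf₁ : f₁ ≠ 0) (hh₁ : h₁ ≠ 0)
    (f h : Quaternion A)
    (hf : f = (f₀ : Quaternion A) + (f₁ : Quaternion A) * qmap I₀)
    (hh : h = (h₀ : Quaternion A) + (h₁ : Quaternion A) * qmap J₀) :
    IsSliced K₀ (f + h) ↔
      ∃ a b : ℝ, a ≠ 0 ∧ b ≠ 0 ∧ K₀ = a • I₀ + b • J₀ ∧
        algebraMap ℝ A b * f₁ = algebraMap ℝ A a * h₁ := by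
  
  obtain ⟨hIre, -⟩ := hI₀
  obtain ⟨hJre, -⟩ := hJ₀
  obtain ⟨hKre, -⟩ := hK₀
  set α := algebraMap ℝ A with hα
  constructor
  · rintro ⟨s, c, hs⟩
    rw [hf, hh] at hs
    rw [Quaternion.ext_iff] at hs
    simp only [qmap_re, qmap_imI, qmap_imJ, qmap_imK, Quaternion.re_add, Quaternion.imI_add, Quaternion.imJ_add,
      Quaternion.imK_add, Quaternion.re_mul, Quaternion.imI_mul, Quaternion.imJ_mul,
      Quaternion.imK_mul, Quaternion.re_coe, Quaternion.imI_coe, Quaternion.imJ_coe,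
      Quaternion.imK_coe, hIre, hJre, hKre, map_zero, mul_zero, zero_mul, add_zero,
      zero_add, sub_zero, zero_sub] at hs
    obtain ⟨hre, hi, hj, hk⟩ := hs
    have key : ∀ φ : Quaternion ℝ →ₗ[ℝ] ℝ,
        f₁ * α (φ I₀) + h₁ * α (φ J₀) = c * α (φ K₀) := by
      intro φ
      rw [phi_decomp I₀ hIre, phi_decomp J₀ hJre, phi_decomp K₀ hKre]
      simp only [map_add, map_mul]
      linear_combination α (φ ⟨0,1,0,0⟩) * hi + α (φ ⟨0,0,1,0⟩) * hj + α (φ ⟨0,0,0,1⟩) * hk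
    by_cases hmem : K₀ ∈ Submodule.span ℝ {I₀, J₀}
    · rw [Submodule.mem_span_pair] at hmem
      obtain ⟨a, b, hab⟩ := hmem
      obtain ⟨ψ₀, hψ₀⟩ := exists_dual ![I₀, J₀] hind 0
      obtain ⟨ψ₁, hψ₁⟩ := exists_dual ![I₀, J₀] hind 1
      have eI0 : ψ₀ I₀ = 1 := by simpa using hψ₀ 0
      have eJ0 : ψ₀ J₀ = 0 := by simpa using hψ₀ 1
      have eI1 : ψ₁ I₀ = 0 := by simpa using hψ₁ 0
      have eJ1 : ψ₁ J₀ = 1 := by simpa using hψ₁ 1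
      have eK0 : ψ₀ K₀ = a := by rw [← hab]; simp [eI0, eJ0]
      have eK1 : ψ₁ K₀ = b := by rw [← hab]; simp [eI1, eJ1]
      have h0 := key ψ₀
      have h1 := key ψ₁
      rw [eI0, eJ0, eK0] at h0
      rw [eI1, eJ1, eK1] at h1
      simp only [map_one, map_zero, mul_one, mul_zero, add_zero, zero_add] at h0 h1
      refine ⟨a, b, ?_, ?_, hab.symm, ?_⟩
      · rintro rfl; simp only [map_zero, mul_zero] at h0; exact hf₁ h0
      · rintro rfl; simp only [map_zero, mul_zero] at h1; exact hh₁ h1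
      · rw [h0, h1]; ring
    · exfalso
      have hind3 : LinearIndependent ℝ ![K₀, I₀, J₀] := by
        rw [show (![K₀, I₀, J₀] : Fin 3 → Quaternion ℝ) = Fin.cons K₀ ![I₀, J₀] from rfl,
          linearIndependent_fin_cons]
        refine ⟨hind, ?_⟩
        intro hc
        apply hmem
        have : Set.range ![I₀, J₀] = {I₀, J₀} := by
          simp [Set.range_subset_iff, Set.pair_comm]
        rwa [this] at hc
      obtain ⟨φ, hφ⟩ := exists_dual ![K₀, I₀, J₀] hind3 0
      have eK : φ K₀ = 1 := by simpa using hφ 0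
      have eI : φ I₀ = 0 := by simpa using hφ 1
      have eJ : φ J₀ = 0 := by simpa using hφ 2
      have h0 := key φ
      rw [eK, eI, eJ] at h0
      simp only [map_one, map_zero, mul_zero, mul_one, add_zero] at h0
      obtain ⟨ψ₀, hψ₀⟩ := exists_dual ![I₀, J₀] hind 0
      have h1 := key ψ₀
      have eI0 : ψ₀ I₀ = 1 := by simpa using hψ₀ 0
      have eJ0 : ψ₀ J₀ = 0 := by simpa using hψ₀ 1
      rw [eI0, eJ0, ← h0] at h1
      simp only [map_one, map_zero, mul_one, mul_zero, add_zero, zero_mul] at h1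
      exact hf₁ h1
  · rintro ⟨a, b, ha, hb, hK, hab⟩
    refine ⟨f₀ + h₀, α a⁻¹ * f₁, ?_⟩
    have hainv : α a⁻¹ * α a = 1 := by rw [← map_mul, inv_mul_cancel₀ ha, map_one]
    have hca : α a⁻¹ * f₁ * α a = f₁ := by
      calc α a⁻¹ * f₁ * α a = f₁ * (α a⁻¹ * α a) := by ring
      _ = f₁ := by rw [hainv, mul_one]
    have hcb : α a⁻¹ * f₁ * α b = h₁ := by
      calc α a⁻¹ * f₁ * α b = α a⁻¹ * (α b * f₁) := by ring
      _ = α a⁻¹ * (α a * h₁) := by rw [hab]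
      _ = h₁ * (α a⁻¹ * α a) := by ring
      _ = h₁ := by rw [hainv, mul_one]
    rw [hf, hh, hK]
    ext <;>
      simp only [qmap_re, qmap_imI, qmap_imJ, qmap_imK, Quaternion.re_add, Quaternion.imI_add, Quaternion.imJ_add,
        Quaternion.imK_add, Quaternion.re_mul, Quaternion.imI_mul, Quaternion.imJ_mul,
        Quaternion.imK_mul, Quaternion.re_coe, Quaternion.imI_coe, Quaternion.imJ_coe,
        Quaternion.imK_coe, Quaternion.re_smul, Quaternion.imI_smul, Quaternion.imJ_smul,
        Quaternion.imK_smul, hIre, hJre, map_zero, map_add, map_mul, smul_eq_mul,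
        mul_zero, zero_mul, add_zero, zero_add, sub_zero, zero_sub, smul_zero]
    · linear_combination -α I₀.imI * hca - α J₀.imI * hcb
    · linear_combination -α I₀.imJ * hca - α J₀.imJ * hcb
    · linear_combination -α I₀.imK * hca - α J₀.imK * hcb
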